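/- Let H be a complex inner product space, ψ ∈ H a unit vector, and A, B : H →ₗ[ℂ] H linear maps that are symmetric on H (⟨A x, y⟩ = ⟨x, A y⟩ and similarly for B). Define ⟨A⟩ = ⟨ψ, A ψ⟩, and the variances Var(A) = ‖(A - ⟨A⟩ • id) ψ‖², Var(B) = ‖(B - ⟨B⟩ • id) ψ‖². Then Var(A) * Var(B) ≥ (1/4) * ‖⟨ψ, (A*B - B*A) ψ⟩‖². -/

import Mathlib

theorem stmt14 {H : Type*} [NormedAddCommGroup H] [InnerProductSpace ℂ H]
    (ψ : H) (hψ : ‖ψ‖ = 1) (A B : H →ₗ[ℂ] H)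
    (hA : ∀ x y : H, (inner ℂ (A x) y : ℂ) = inner ℂ x (A y))
    (hB : ∀ x y : H, (inner ℂ (B x) y : ℂ) = inner ℂ x (B y)) :
    ‖A ψ - (inner ℂ ψ (A ψ) : ℂ) • ψ‖ ^ 2 * ‖B ψ - (inner ℂ ψ (B ψ) : ℂ) • ψ‖ ^ 2 ≥
      (1 / 4) * ‖(inner ℂ ψ (A (B ψ) - B (A ψ)) : ℂ)‖ ^ 2 := by
  set a : ℂ := inner ℂ ψ (A ψ) with ha_def
  set b : ℂ := inner ℂ ψ (B ψ) with hb_def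
  set u : H := A ψ - a • ψ with hu_def
  set v : H := B ψ - b • ψ with hv_def
  have hψψ : (inner ℂ ψ ψ : ℂ) = 1 := by
    rw [inner_self_eq_norm_sq_to_K, hψ]; norm_num
  have ha : starRingEnd ℂ a = a := by
    rw [ha_def, ← hA ψ ψ, inner_conj_symm]; exact (hA ψ ψ).symm
  have hb : starRingEnd ℂ b = b := by
    rw [hb_def, ← hB ψ ψ, inner_conj_symm]; exact (hB ψ ψ).symm
  have hAψψ : (inner ℂ (A ψ) ψ : ℂ) = a := hA ψ ψ
  have hBψψ : (inner ℂ (B ψ) ψ : ℂ) = b := hB ψ ψ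
  set c : ℂ := inner ℂ (A ψ) (B ψ) with hc_def
  have huv : (inner ℂ u v : ℂ) = c - a * b := by
    simp only [hu_def, hv_def, inner_sub_left, inner_sub_right, inner_smul_left,
      inner_smul_right, hAψψ, hBψψ, hψψ, ha, hb]
    rw [hc_def]; ring
  have hcomm : (inner ℂ ψ (A (B ψ) - B (A ψ)) : ℂ)
      = (inner ℂ u v : ℂ) - starRingEnd ℂ (inner ℂ u v : ℂ) := by
    rw [inner_sub_right, ← hA ψ (B ψ), ← hB ψ (A ψ), huv, map_sub, map_mul, ha, hb,
      inner_conj_symm]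
    ring
  set d : ℂ := inner ℂ u v with hd_def
  have him : d - starRingEnd ℂ d = (2 * d.im : ℝ) * Complex.I := by
    have := Complex.sub_conj d
    push_cast at this ⊢
    rw [this]
  have hnorm : ‖(inner ℂ ψ (A (B ψ) - B (A ψ)) : ℂ)‖ = 2 * |d.im| := by
    rw [hcomm, him]
    rw [norm_mul, Complex.norm_I, mul_one, Complex.norm_real, Real.norm_eq_abs,
      abs_mul]
    norm_num
  have hCS : ‖d‖ ≤ ‖u‖ * ‖v‖ := norm_inner_le_norm u v
  have him_le : |d.im| ≤ ‖d‖ := Complex.abs_im_le_norm d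
  have h1 : |d.im| ≤ ‖u‖ * ‖v‖ := him_le.trans hCS
  have h2 : (2 * |d.im|) ^ 2 ≤ 4 * (‖u‖ * ‖v‖) ^ 2 := by
    have := mul_self_le_mul_self (abs_nonneg d.im) h1
    nlinarith [abs_nonneg d.im, norm_nonneg u, norm_nonneg v]
  rw [ge_iff_le, hnorm]
  nlinarith [h2]
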